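/- As n → ∞, P(n) ∼ (n!/2) · (1/log 2)^{n+1}. -/

import Mathlib

open scoped BigOperators

/-- A zero-one matrix (entries in `Bool`) with no zero rows and no zero columns. -/
def IsIncidence {k l : ℕ} (M : Matrix (Fin k) (Fin l) Bool) : Prop :=
  (∀ i, ∃ j, M i j = true) ∧ (∀ j, ∃ i, M i j = true)

/-- The number of entries equal to one in a zero-one matrix. -/
def numOnes {k l : ℕ} (M : Matrix (Fin k) (Fin l) Bool) : ℕ :=
  (Finset.univ.filter fun p : Fin k × Fin l => M p.1 p.2 = true).card

/-- `F₁₁₁₁ n`: the number of incidence matrices (of any size) with exactly `n` ones. -/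
noncomputable def F1111 (n : ℕ) : ℕ :=
  Nat.card {A : Σ k l : ℕ, Matrix (Fin k) (Fin l) Bool //
    IsIncidence A.2.2 ∧ numOnes A.2.2 = n}

noncomputable def mIJ (i j n : ℕ) : ℕ :=
  Nat.card {M : Matrix (Fin i) (Fin j) Bool // IsIncidence M ∧ numOnes M = n}

/-- total preorders on `Fin n` -/
noncomputable def numPreorders (n : ℕ) : ℕ :=
  Nat.card {R : Fin n → Fin n → Prop //
    (∀ x, R x x) ∧ (∀ x y z, R x y → R y z → R x z) ∧ (∀ x y, R x y ∨ x = y ∨ R y x)}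

noncomputable def numPreordersWithBlocks (n k : ℕ) : ℕ :=
  Nat.card {R : Fin n → Fin n → Prop //
    ((∀ x, R x x) ∧ (∀ x y z, R x y → R y z → R x z) ∧ (∀ x y, R x y ∨ x = y ∨ R y x)) ∧
    Nat.card (Quot fun x y => R x y ∧ R y x) = k}

noncomputable def S11 (n : ℕ) : ℕ :=
  Nat.card {A : Σ k : ℕ, Matrix (Fin k) (Fin k) Bool //
    (∀ i j, A.2 i j = A.2 j i) ∧ IsIncidence A.2 ∧ numOnes A.2 = n}

def trSigma : (Σ k l : ℕ, Matrix (Fin k) (Fin l) Bool) → (Σ k l : ℕ, Matrix (Fin k) (Fin l) Bool) :=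
  fun A => ⟨A.2.1, A.1, A.2.2.transpose⟩

noncomputable def Phi11 (n : ℕ) : ℕ :=
  Nat.card (Quot fun x y : {A : Σ k l : ℕ, Matrix (Fin k) (Fin l) Bool //
    IsIncidence A.2.2 ∧ numOnes A.2.2 = n} => trSigma x.1 = y.1)

noncomputable def F1011 (n : ℕ) : ℕ :=
  Nat.card {A : Σ k l : ℕ, Matrix (Fin k) (Fin l) Bool //
    IsIncidence A.2.2 ∧ numOnes A.2.2 = n ∧
    ∀ i i' : Fin A.1, (∀ j, A.2.2 i j = A.2.2 i' j) → i = i'}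

noncomputable def F0001 (n : ℕ) : ℕ :=
  Nat.card (Quot fun x y : {A : Σ k l : ℕ, Matrix (Fin k) (Fin l) Bool //
      IsIncidence A.2.2 ∧ numOnes A.2.2 = n ∧
      ∀ i i' : Fin A.1, (∀ j, A.2.2 i j = A.2.2 i' j) → i = i'} =>
    ∃ σ : Equiv.Perm (Fin x.1.1), ∃ τ : Equiv.Perm (Fin x.1.2.1),
      y.1 = ⟨x.1.1, x.1.2.1, Matrix.of fun i j => x.1.2.2 (σ i) (τ j)⟩)

noncomputable def numInvolutions (n : ℕ) : ℕ :=
  Nat.card {σ : Equiv.Perm (Fin n) // σ * σ = 1}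

/-- number of cycles of a permutation, counting fixed points as cycles -/
def numCycles {n : ℕ} (σ : Equiv.Perm (Fin n)) : ℕ :=
  Multiset.card σ.cycleType + (n - σ.support.card)

/-- unsigned Stirling number of the first kind: permutations of `n` with `k` cycles -/
noncomputable def stirling1Unsigned (n k : ℕ) : ℕ :=
  Nat.card {σ : Equiv.Perm (Fin n) // numCycles σ = k}

/-- Stirling number of the second kind: partitions of an `n`-set into `k` blocks -/
noncomputable def stirling2 (n k : ℕ) : ℕ :=
  Nat.card {c : Setoid (Fin n) // Nat.card (Quotient c) = k}

noncomputable def sSym (k n : ℕ) : ℕ :=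
  Nat.card {M : Matrix (Fin k) (Fin k) Bool // (∀ a b, M a b = M b a) ∧ numOnes M = n}

noncomputable def muSym (i n : ℕ) : ℕ :=
  Nat.card {M : Matrix (Fin i) (Fin i) Bool //
    (∀ a b, M a b = M b a) ∧ IsIncidence M ∧ numOnes M = n}


section AuxProofs
open MeasureTheory Set Filter Real Asymptotics

attribute [-instance] Quotient.instLE_mathlib Quotient.instPreorder

namespace NumPreAux

def PCond (n : ℕ) (R : Fin n → Fin n → Prop) : Prop :=
  (∀ x, R x x) ∧ (∀ x y z, R x y → R y z → R x z) ∧ (∀ x y, R x y ∨ x = y ∨ R y x)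

noncomputable def surjCount (n k : ℕ) : ℕ :=
  Nat.card {f : Fin n → Fin k // Function.Surjective f}

variable {n : ℕ}

lemma PCond.total {R : Fin n → Fin n → Prop} (hR : PCond n R) (x y : Fin n) :
    R x y ∨ R y x := by
  rcases hR.2.2 x y with h | rfl | h
  · exact Or.inl h
  · exact Or.inl (hR.1 x)
  · exact Or.inr h

def pSetoid (R : Fin n → Fin n → Prop) (hR : PCond n R) : Setoid (Fin n) where
  r x y := R x y ∧ R y x
  iseqv := ⟨fun x => ⟨hR.1 x, hR.1 x⟩, fun h => ⟨h.2, h.1⟩,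
    fun h1 h2 => ⟨hR.2.1 _ _ _ h1.1 h2.1, hR.2.1 _ _ _ h2.2 h1.2⟩⟩

noncomputable def pLin (R : Fin n → Fin n → Prop) (hR : PCond n R) :
    LinearOrder (Quotient (pSetoid R hR)) where
  le := Quotient.lift₂ R (by
    rintro a b a' b' ⟨hab1, hab2⟩ ⟨hcd1, hcd2⟩
    exact propext ⟨fun h => hR.2.1 _ _ _ hab2 (hR.2.1 _ _ _ h hcd1),
      fun h => hR.2.1 _ _ _ hab1 (hR.2.1 _ _ _ h hcd2)⟩)
  le_refl := fun a => Quotient.inductionOn a fun x => hR.1 x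
  le_trans := fun a b c => Quotient.inductionOn₃ a b c fun x y z h1 h2 => hR.2.1 _ _ _ h1 h2
  le_antisymm := fun a b => Quotient.inductionOn₂ a b fun x y h1 h2 => Quotient.sound ⟨h1, h2⟩
  le_total := fun a b => Quotient.inductionOn₂ a b fun x y => hR.total x y
  toDecidableLE := Classical.decRel _

noncomputable def pFintype (R : Fin n → Fin n → Prop) (hR : PCond n R) :
    Fintype (Quotient (pSetoid R hR)) := Fintype.ofFinite _

noncomputable def pCard (R : Fin n → Fin n → Prop) (hR : PCond n R) : ℕ :=
  @Fintype.card _ (pFintype R hR)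

noncomputable def pRank (R : Fin n → Fin n → Prop) (hR : PCond n R) :
    Fin n → Fin (pCard R hR) :=
  letI := pFintype R hR
  letI := pLin R hR
  fun x => (monoEquivOfFin (Quotient (pSetoid R hR)) rfl).symm
    (Quotient.mk (pSetoid R hR) x)

lemma pRank_le_iff (R : Fin n → Fin n → Prop) (hR : PCond n R) (x y : Fin n) :
    pRank R hR x ≤ pRank R hR y ↔ R x y := by
  letI := pLin R hR
  letI := pFintype R hR
  unfold pRank
  exact ((monoEquivOfFin (Quotient (pSetoid R hR)) rfl).symm.le_iff_le).trans Iff.rfl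

lemma pRank_surjective (R : Fin n → Fin n → Prop) (hR : PCond n R) :
    Function.Surjective (pRank R hR) := by
  letI := pLin R hR
  letI := pFintype R hR
  intro j
  obtain ⟨x, hx⟩ : ∃ x, Quotient.mk (pSetoid R hR) x = (monoEquivOfFin _ rfl) j :=
    Quotient.exists_rep _
  exact ⟨x, by simp [pRank, hx]; exact OrderIso.symm_apply_apply _ _⟩

lemma pCard_le (R : Fin n → Fin n → Prop) (hR : PCond n R) : pCard R hR ≤ n := by
  letI := pFintype R hR
  have : Function.Surjective (Quotient.mk (pSetoid R hR)) := Quotient.exists_rep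
  simpa [pCard] using Fintype.card_le_of_surjective _ this

lemma sigma_eq {a b : ℕ} (g : Fin n → Fin a) (f : Fin n → Fin b)
    (hg : Function.Surjective g) (hf : Function.Surjective f)
    (h : ∀ x y, g x ≤ g y ↔ f x ≤ f y) :
    (⟨a, g⟩ : Σ k : ℕ, (Fin n → Fin k)) = ⟨b, f⟩ := by
  have hcong : ∀ z w : Fin n, g z = g w → f z = f w := fun z w hzw =>
    le_antisymm ((h z w).1 hzw.le) ((h w z).1 hzw.ge)
  set u : Fin a → Fin b := fun j => f (Function.surjInv hg j) with hu
  have key : ∀ x, u (g x) = f x := fun x =>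
    hcong _ _ (Function.surjInv_eq hg (g x))
  have humono : Monotone u := by
    intro j j' hjj'
    have h1 : g (Function.surjInv hg j) = j := Function.surjInv_eq hg j
    have h2 : g (Function.surjInv hg j') = j' := Function.surjInv_eq hg j'
    exact (h _ _).1 (by rw [h1, h2]; exact hjj')
  have husurj : Function.Surjective u := fun i => by
    obtain ⟨x, rfl⟩ := hf i; exact ⟨g x, key x⟩
  have huinj : Function.Injective u := by
    intro j j' hjj'
    obtain ⟨x, rfl⟩ := hg j; obtain ⟨y, rfl⟩ := hg j'
    rw [key, key] at hjj'
    exact le_antisymm ((h x y).2 hjj'.le) ((h y x).2 hjj'.ge)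
  have hab : a = b := by
    simpa using Fintype.card_of_bijective (f := u) ⟨huinj, husurj⟩
  subst hab
  have hid : u = id := by
    have hs : StrictMono u := humono.strictMono_of_injective huinj
    have h1 := Subsingleton.elim (StrictMono.orderIsoOfSurjective u hs husurj)
      (OrderIso.refl (Fin a))
    funext j
    have := congrArg (fun (e : Fin a ≃o Fin a) => e j) h1
    simpa [StrictMono.coe_orderIsoOfSurjective] using this
  refine congrArg (Sigma.mk a) (funext fun x => ?_)
  have := key x
  rw [hid] at this
  simpa using this

lemma sig_lift {n : ℕ} {p q : Σ k : ℕ, (Fin n → Fin k)} (h : p = q)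
    (hp : p.1 < n + 1) (hq : q.1 < n + 1)
    (hsp : Function.Surjective p.2) (hsq : Function.Surjective q.2) :
    (⟨⟨p.1, hp⟩, p.2, hsp⟩ :
        Σ k : Fin (n + 1), {f : Fin n → Fin (k : ℕ) // Function.Surjective f})
      = ⟨⟨q.1, hq⟩, q.2, hsq⟩ := by
  cases h; rfl

noncomputable def Phi (n : ℕ) : {R : Fin n → Fin n → Prop // PCond n R} →
    Σ k : Fin (n + 1), {f : Fin n → Fin (k : ℕ) // Function.Surjective f} :=
  fun r => ⟨⟨pCard r.1 r.2, Nat.lt_succ_of_le (pCard_le r.1 r.2)⟩,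
    pRank r.1 r.2, pRank_surjective r.1 r.2⟩

lemma Phi_inj : Function.Injective (Phi n) := by
  rintro ⟨R, hR⟩ ⟨R', hR'⟩ hEq
  refine Subtype.ext (funext fun x => funext fun y => propext ?_)
  show R x y ↔ R' x y
  rw [← pRank_le_iff R hR x y, ← pRank_le_iff R' hR' x y]
  have := congrArg (fun p : (Σ k : Fin (n + 1),
      {f : Fin n → Fin (k : ℕ) // Function.Surjective f}) =>
      (p.2.1 x ≤ p.2.1 y : Prop)) hEq
  exact iff_of_eq this

lemma Phi_surj : Function.Surjective (Phi n) := by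
  rintro ⟨k, f, hf⟩
  have hR : PCond n (fun x y => f x ≤ f y) := by
    refine ⟨fun x => le_refl _, fun x y z h1 h2 => le_trans h1 h2, fun x y => ?_⟩
    rcases le_total (f x) (f y) with h | h
    · exact Or.inl h
    · exact Or.inr (Or.inr h)
  refine ⟨⟨fun x y => f x ≤ f y, hR⟩, ?_⟩
  have hfid : ∀ x y, pRank _ hR x ≤ pRank _ hR y ↔ f x ≤ f y := pRank_le_iff _ hR
  have hsig := sigma_eq (pRank _ hR) f (pRank_surjective _ hR) hf hfid
  exact sig_lift hsig _ _ _ _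

theorem numPreorders_eq_sum (n : ℕ) :
    numPreorders n = ∑ k ∈ Finset.range (n + 1), surjCount n k := by
  classical
  have h1 : numPreorders n = Nat.card
      (Σ k : Fin (n + 1), {f : Fin n → Fin (k : ℕ) // Function.Surjective f}) :=
    Nat.card_congr (Equiv.ofBijective (Phi n) ⟨Phi_inj, Phi_surj⟩)
  haveI : ∀ k : Fin (n + 1), Fintype {f : Fin n → Fin (k : ℕ) // Function.Surjective f} :=
    fun k => Fintype.ofFinite _
  rw [h1, Nat.card_eq_fintype_card, Fintype.card_sigma, ← Fin.sum_univ_eq_sum_range]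
  exact Finset.sum_congr rfl fun k _ => (Nat.card_eq_fintype_card).symm

lemma surjCount_eq_zero {n k : ℕ} (h : n < k) : surjCount n k = 0 := by
  have : IsEmpty {f : Fin n → Fin k // Function.Surjective f} := by
    refine ⟨fun ⟨f, hf⟩ => ?_⟩
    have := Fintype.card_le_of_surjective f hf
    simp only [Fintype.card_fin] at this
    omega
  simp [surjCount, Nat.card_of_isEmpty]

theorem pow_eq_sum (n j : ℕ) :
    j ^ n = ∑ k ∈ Finset.range (n + 1), j.choose k * surjCount n k := by
  classical
  have hproj : Function.Bijective
      (fun (p : Σ s : Finset (Fin j), {F : Fin n → {x // x ∈ s} // Function.Surjective F}) =>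
        (fun x => (p.2.1 x).1 : Fin n → Fin j)) := by
    constructor
    · rintro ⟨s, F, hF⟩ ⟨s', F', hF'⟩ h
      dsimp at h
      have hs : s = s' := by
        ext z
        constructor
        · intro hz
          obtain ⟨x, hx⟩ := hF ⟨z, hz⟩
          have : (F x).1 = z := by rw [hx]
          rw [← this, congrFun h x]
          exact (F' x).2
        · intro hz
          obtain ⟨x, hx⟩ := hF' ⟨z, hz⟩
          have : (F' x).1 = z := by rw [hx]
          rw [← this, ← congrFun h x]
          exact (F x).2
      subst hs
      have : F = F' := funext fun x => Subtype.ext (congrFun h x)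
      subst this
      rfl
    · intro f
      refine ⟨⟨Finset.univ.image f, ⟨fun x => ⟨f x, Finset.mem_image_of_mem f (Finset.mem_univ x)⟩,
        ?_⟩⟩, rfl⟩
      rintro ⟨y, hy⟩
      obtain ⟨x, -, rfl⟩ := Finset.mem_image.1 hy
      exact ⟨x, rfl⟩
  haveI : ∀ s : Finset (Fin j), Fintype {F : Fin n → {x // x ∈ s} // Function.Surjective F} :=
    fun s => Fintype.ofFinite _
  have h1 : j ^ n = Nat.card
      (Σ s : Finset (Fin j), {F : Fin n → {x // x ∈ s} // Function.Surjective F}) := by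
    rw [Nat.card_congr (Equiv.ofBijective _ hproj), Nat.card_eq_fintype_card]
    simp [Fintype.card_fun]
  have h2 : ∀ s : Finset (Fin j),
      Nat.card {F : Fin n → {x // x ∈ s} // Function.Surjective F} = surjCount n s.card := by
    intro s
    have e : {x // x ∈ s} ≃ Fin s.card := Fintype.equivFinOfCardEq (Fintype.card_coe s)
    refine Nat.card_congr (Equiv.subtypeEquiv ((Equiv.refl (Fin n)).arrowCongr e) fun F => ?_)
    have : ((Equiv.refl (Fin n)).arrowCongr e) F = e ∘ F := by
      funext x; simp [Equiv.arrowCongr]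
    rw [this]
    exact (e.comp_surjective F).symm
  have h3 : j ^ n = ∑ s : Finset (Fin j), surjCount n s.card := by
    rw [h1, Nat.card_eq_fintype_card, Fintype.card_sigma]
    exact Finset.sum_congr rfl fun s _ => by rw [← Nat.card_eq_fintype_card, h2]
  rw [h3, ← Finset.powerset_univ, Finset.sum_powerset_apply_card]
  have h4 : ∀ m ∈ Finset.range ((Finset.univ (α := Fin j)).card + 1),
      (Finset.univ (α := Fin j)).card.choose m • surjCount n m = j.choose m * surjCount n m := by
    intro m _
    simp [Finset.card_univ, smul_eq_mul]
  rw [Finset.sum_congr rfl h4]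
  simp only [Finset.card_univ, Fintype.card_fin]
  -- now: ∑ k in range (j+1), j.choose k * surjCount n k = ∑ k in range (n+1), ...
  rcases le_total j n with hjn | hnj
  · exact Finset.sum_subset (Finset.range_subset_range.2 (by omega))
      (fun k hk hks => by
        have hlt : j < k := by simp only [Finset.mem_range] at hk hks; omega
        rw [Nat.choose_eq_zero_of_lt hlt, zero_mul])
  · exact (Finset.sum_subset (Finset.range_subset_range.2 (by omega))
      (fun k hk hks => by
        have hlt : n < k := by simp only [Finset.mem_range] at hk hks; omega
        rw [surjCount_eq_zero hlt, mul_zero])).symm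

lemma hasSum_choose_half (k : ℕ) :
    HasSum (fun j : ℕ => (j.choose k : ℝ) * (1 / 2) ^ (j + 1)) 1 := by
  have h0 : ‖(1 / 2 : ℝ)‖ < 1 := by
    rw [Real.norm_eq_abs, abs_of_pos (by norm_num : (0:ℝ) < 1/2)]; norm_num
  have h := (hasSum_choose_mul_geometric_of_norm_lt_one k h0).mul_left ((1 / 2 : ℝ) ^ (k + 1))
  have hval : (1 / 2 : ℝ) ^ (k + 1) * (1 / (1 - 1 / 2) ^ (k + 1)) = 1 := by
    norm_num
  rw [hval] at h
  have h' : HasSum (fun m : ℕ => ((m + k).choose k : ℝ) * (1 / 2) ^ (m + k + 1)) 1 := by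
    refine h.congr_fun fun m => ?_
    rw [pow_add, pow_add]
    ring
  have := (hasSum_nat_add_iff (f := fun j : ℕ => (j.choose k : ℝ) * (1 / 2) ^ (j + 1)) k).1 h'
  have hz : ∑ i ∈ Finset.range k, (i.choose k : ℝ) * (1 / 2) ^ (i + 1) = 0 :=
    Finset.sum_eq_zero fun i hi => by
      rw [Nat.choose_eq_zero_of_lt (Finset.mem_range.1 hi)]; simp
  rwa [hz, add_zero] at this

theorem hasSum_numPreorders (n : ℕ) :
    HasSum (fun j : ℕ => (j : ℝ) ^ n * (1 / 2) ^ (j + 1)) ((numPreorders n : ℝ)) := by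
  have h : ∀ k ∈ Finset.range (n + 1),
      HasSum (fun j : ℕ => (surjCount n k : ℝ) * ((j.choose k : ℝ) * (1 / 2) ^ (j + 1)))
        ((surjCount n k : ℝ)) := fun k _ => by
    simpa using (hasSum_choose_half k).mul_left ((surjCount n k : ℝ))
  have H := hasSum_sum h
  have h1 : (fun j : ℕ => ∑ k ∈ Finset.range (n + 1),
      (surjCount n k : ℝ) * ((j.choose k : ℝ) * (1 / 2) ^ (j + 1)))
      = fun j : ℕ => (j : ℝ) ^ n * (1 / 2) ^ (j + 1) := by
    funext j
    have := pow_eq_sum n j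
    calc ∑ k ∈ Finset.range (n + 1), (surjCount n k : ℝ) * ((j.choose k : ℝ) * (1 / 2) ^ (j + 1))
        = (∑ k ∈ Finset.range (n + 1), (j.choose k : ℝ) * (surjCount n k : ℝ)) * (1 / 2) ^ (j + 1) := by
          rw [Finset.sum_mul]; exact Finset.sum_congr rfl fun k _ => by ring
      _ = ((j ^ n : ℕ) : ℝ) * (1 / 2) ^ (j + 1) := by
          rw [this]; push_cast; ring
      _ = (j : ℝ) ^ n * (1 / 2) ^ (j + 1) := by push_cast; ring
  have h2 : (∑ k ∈ Finset.range (n + 1), (surjCount n k : ℝ)) = (numPreorders n : ℝ) := by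
    rw [numPreorders_eq_sum]; push_cast; ring
  rw [h1, h2] at H
  exact H

end NumPreAux


namespace NumPreAnal

noncomputable def ff (n : ℕ) : ℝ → ℝ := fun x => x ^ n * Real.exp (-(Real.log 2 * x))

lemma t_pos : 0 < Real.log 2 := Real.log_pos (by norm_num)

lemma ff_nonneg (n : ℕ) {x : ℝ} (hx : 0 ≤ x) : 0 ≤ ff n x := by
  unfold ff; positivity

lemma ff_cont (n : ℕ) : Continuous (ff n) := by
  unfold ff; fun_prop

lemma ff_integrableOn (n : ℕ) (a : ℝ) : IntegrableOn (ff n) (Ioi a) := by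
  apply integrable_of_isBigO_exp_neg (b := Real.log 2 / 2) (by positivity)
    ((ff_cont n).continuousOn)
  have h1 : (fun x : ℝ => x ^ n) =o[atTop] fun x => Real.exp (Real.log 2 / 2 * x) :=
    isLittleO_pow_exp_pos_mul_atTop n (by positivity)
  have h2 := h1.isBigO.mul (isBigO_refl (fun x : ℝ => Real.exp (-(Real.log 2 * x))) atTop)
  show (fun x : ℝ => x ^ n * Real.exp (-(Real.log 2 * x))) =O[atTop] _
  refine h2.congr' (EventuallyEq.refl _ _) ?_
  filter_upwards with x
  rw [← Real.exp_add]
  congr 1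
  ring

lemma ff_integral (n : ℕ) :
    ∫ x in Ioi (0 : ℝ), ff n x = n.factorial / (Real.log 2) ^ (n + 1) := by
  have h := integral_rpow_mul_exp_neg_mul_Ioi (a := (n + 1 : ℝ)) (r := Real.log 2)
    (by positivity) t_pos
  have h1 : ∀ x ∈ Ioi (0 : ℝ), x ^ ((n + 1 : ℝ) - 1) * Real.exp (-(Real.log 2 * x)) = ff n x := by
    intro x hx
    have : ((n + 1 : ℝ) - 1) = (n : ℝ) := by ring
    rw [this, Real.rpow_natCast]
    rfl
  rw [← setIntegral_congr_fun measurableSet_Ioi h1, h]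
  rw [show ((n : ℝ) + 1) = ((n + 1 : ℕ) : ℝ) by push_cast; ring, Real.rpow_natCast]
  have hg : Real.Gamma (((n + 1 : ℕ)) : ℝ) = n.factorial := by
    push_cast
    exact Real.Gamma_nat_eq_factorial n
  rw [hg, one_div, inv_pow, inv_mul_eq_div]

end NumPreAnal

namespace NumPreAnal2
open NumPreAnal

lemma ff_exp_form {n : ℕ} {x : ℝ} (hx : 0 < x) :
    ff n x = Real.exp (n * Real.log x - Real.log 2 * x) := by
  have hxn : x ^ n = Real.exp (n * Real.log x) := by
    rw [Real.exp_nat_mul, Real.exp_log hx]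
  unfold ff
  rw [hxn, ← Real.exp_add]
  ring_nf

lemma ff_zero {n : ℕ} (hn : 1 ≤ n) : ff n 0 = 0 := by
  unfold ff; rw [zero_pow (by omega)]; ring

lemma ff_mono {n : ℕ} (hn : 1 ≤ n) :
    MonotoneOn (ff n) (Icc 0 ((n : ℝ) / Real.log 2)) := by
  rintro x ⟨hx0, hxc⟩ y ⟨hy0, hyc⟩ hxy
  rcases eq_or_lt_of_le hx0 with rfl | hx
  · rcases eq_or_lt_of_le hy0 with rfl | hy
    · exact le_refl _
    · rw [ff_zero hn]; exact ff_nonneg n hy0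
  · have hy : 0 < y := lt_of_lt_of_le hx hxy
    rw [ff_exp_form hx, ff_exp_form hy]
    apply Real.exp_le_exp.2
    have hlog : Real.log y - Real.log x = Real.log (y / x) := (Real.log_div hy.ne' hx.ne').symm
    have h1 : 1 - x / y ≤ Real.log (y / x) := by
      have hle := Real.log_le_sub_one_of_pos (show 0 < x / y by positivity)
      have hinv : Real.log (x / y) = - Real.log (y / x) := by
        rw [← Real.log_inv]; congr 1; rw [inv_div]
      have hdiv : x / y = 1 / (y / x) := by field_simp
      nlinarith [hle, hinv]
    have hty : Real.log 2 * y ≤ (n : ℝ) := by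
      have := (le_div_iff₀ t_pos).1 hyc
      linarith
    have hdiv : x / y * y = x := div_mul_cancel₀ x hy.ne'
    have hxy1 : x / y ≤ 1 := (div_le_one hy).2 hxy
    have h3 : (n : ℝ) * (1 - x / y) ≤ n * Real.log (y / x) :=
      mul_le_mul_of_nonneg_left h1 (by positivity)
    have h2 : Real.log 2 * (y - x) ≤ (n : ℝ) * (1 - x / y) := by
      nlinarith [mul_nonneg (sub_nonneg.2 hty) (sub_nonneg.2 hxy1)]
    nlinarith [hlog]

lemma ff_anti {n : ℕ} (hn : 1 ≤ n) :
    AntitoneOn (ff n) (Ici ((n : ℝ) / Real.log 2)) := by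
  have hc : 0 < (n : ℝ) / Real.log 2 := by
    apply div_pos _ t_pos
    exact_mod_cast hn
  rintro x hx y hy hxy
  have hx0 : 0 < x := lt_of_lt_of_le hc hx
  have hy0 : 0 < y := lt_of_lt_of_le hc (le_trans hx hxy)
  rw [ff_exp_form hx0, ff_exp_form hy0]
  apply Real.exp_le_exp.2
  have hlog : Real.log y - Real.log x = Real.log (y / x) := (Real.log_div hy0.ne' hx0.ne').symm
  have h1 : Real.log (y / x) ≤ y / x - 1 := Real.log_le_sub_one_of_pos (by positivity)
  have htx : (n : ℝ) ≤ Real.log 2 * x := by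
    have := (div_le_iff₀ t_pos).1 hx
    linarith
  have hdiv : y / x * x = y := div_mul_cancel₀ y hx0.ne'
  have hxy1 : 1 ≤ y / x := (one_le_div hx0).2 hxy
  have h3 : (n : ℝ) * Real.log (y / x) ≤ n * (y / x - 1) :=
    mul_le_mul_of_nonneg_left h1 (by positivity)
  have h2 : (n : ℝ) * (y / x - 1) ≤ Real.log 2 * (y - x) := by
    nlinarith [mul_nonneg (sub_nonneg.2 htx) (sub_nonneg.2 hxy1)]
  nlinarith [hlog]

lemma ff_le_max {n : ℕ} (hn : 1 ≤ n) {x : ℝ} (hx : 0 ≤ x) :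
    ff n x ≤ ff n ((n : ℝ) / Real.log 2) := by
  have hc : 0 < (n : ℝ) / Real.log 2 := by
    apply div_pos _ t_pos
    exact_mod_cast hn
  rcases le_total x ((n : ℝ) / Real.log 2) with h | h
  · exact ff_mono hn ⟨hx, h⟩ ⟨hc.le, le_refl _⟩ h
  · exact ff_anti hn (Set.mem_Ici.2 (le_refl _)) h h

lemma ff_summable (n : ℕ) : Summable (fun j : ℕ => ff n (j : ℝ)) := by
  have heq : (fun j : ℕ => ff n (j : ℝ)) = fun j : ℕ => (j : ℝ) ^ n * (1 / 2 : ℝ) ^ j := by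
    funext j
    unfold ff
    congr 1
    rw [show -(Real.log 2 * (j : ℝ)) = (j : ℕ) * (-Real.log 2) by push_cast; ring,
      Real.exp_nat_mul, Real.exp_neg, Real.exp_log (by norm_num : (0:ℝ) < 2)]
    norm_num
  rw [heq]
  exact summable_pow_mul_geometric_of_norm_lt_one n
    (by rw [Real.norm_eq_abs, abs_of_pos (by norm_num : (0:ℝ) < 1/2)]; norm_num)

end NumPreAnal2

namespace NumPreAnal3
open NumPreAnal NumPreAnal2

lemma split1 (n : ℕ) {a b : ℝ} (hab : a ≤ b) :
    (∫ x in Ioi a, ff n x) = (∫ x in Ioc a b, ff n x) + (∫ x in Ioi b, ff n x) := by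
  rw [← setIntegral_union (Ioc_disjoint_Ioi le_rfl) measurableSet_Ioi
    ((ff_integrableOn n a).mono_set Ioc_subset_Ioi_self) (ff_integrableOn n b),
    Ioc_union_Ioi_eq_Ioi hab]

lemma tail_integral_le (n m : ℕ) (hanti : AntitoneOn (ff n) (Ici (m : ℝ))) :
    ∫ x in Ioi ((m : ℝ)), ff n x ≤ ∑' j : ℕ, ff n (((j + m : ℕ) : ℝ)) := by
  have hint := ff_integrableOn n m
  have tnd := intervalIntegral_tendsto_integral_Ioi (μ := volume) ((m : ℝ)) hint
    (tendsto_atTop_add_const_left atTop ((m : ℝ))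
      (tendsto_natCast_atTop_atTop (R := ℝ)))
  refine le_of_tendsto tnd (Eventually.of_forall fun N => ?_)
  have hsum_le := AntitoneOn.integral_le_sum (x₀ := (m : ℝ)) (a := N)
    (hanti.mono (Icc_subset_Ici_self))
  refine le_trans hsum_le ?_
  have heq : ∀ i : ℕ, ff n ((m : ℝ) + (i : ℕ)) = (fun j : ℕ => ff n (((j + m : ℕ) : ℝ))) i := by
    intro i; congr 1; push_cast; ring
  rw [Finset.sum_congr rfl (fun i _ => heq i)]
  exact Summable.sum_le_tsum (Finset.range N) (fun i _ => ff_nonneg n (by positivity))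
    ((summable_nat_add_iff m).2 (ff_summable n))

lemma tail_le_integral (n m : ℕ) (hanti : AntitoneOn (ff n) (Ici (m : ℝ))) :
    ∑' j : ℕ, ff n (((j + (m + 1) : ℕ) : ℝ)) ≤ ∫ x in Ioi ((m : ℝ)), ff n x := by
  have hIoc : ∀ N : ℕ, (∫ x in (m : ℝ)..((m : ℝ) + N), ff n x) ≤ ∫ x in Ioi ((m : ℝ)), ff n x := by
    intro N
    rw [intervalIntegral.integral_of_le (le_add_of_nonneg_right (Nat.cast_nonneg N))]
    apply setIntegral_mono_set (ff_integrableOn n m)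
    · refine (ae_restrict_iff' measurableSet_Ioi).2 (Eventually.of_forall fun x hx => ?_)
      have : (0:ℝ) ≤ (m:ℝ) := by positivity
      exact ff_nonneg n (le_of_lt (lt_of_le_of_lt this hx))
    · exact HasSubset.Subset.eventuallyLE Ioc_subset_Ioi_self
  apply Real.tsum_le_of_sum_range_le (fun i => ff_nonneg n (Nat.cast_nonneg _))
  intro N
  have h := AntitoneOn.sum_le_integral (x₀ := (m : ℝ)) (a := N)
    (hanti.mono Icc_subset_Ici_self)
  refine le_trans (le_of_eq ?_) (h.trans (hIoc N))
  refine Finset.sum_congr rfl fun i _ => ?_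
  congr 1
  push_cast
  ring

end NumPreAnal3

namespace NumPreAnal4
open NumPreAnal NumPreAnal2 NumPreAnal3

lemma sandwich {n : ℕ} (hn : 1 ≤ n) :
    (n.factorial : ℝ) / Real.log 2 ^ (n + 1) - ff n ((n : ℝ) / Real.log 2)
      ≤ (∑' j : ℕ, ff n (j : ℝ))
    ∧ (∑' j : ℕ, ff n (j : ℝ))
      ≤ (n.factorial : ℝ) / Real.log 2 ^ (n + 1) + 2 * ff n ((n : ℝ) / Real.log 2) := by
  have hc : 0 < (n : ℝ) / Real.log 2 := div_pos (by exact_mod_cast hn) t_pos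
  set c : ℝ := (n : ℝ) / Real.log 2 with hcdef
  set m : ℕ := ⌊c⌋₊ with hmdef
  have hmc : (m : ℝ) ≤ c := Nat.floor_le hc.le
  have hcm1' : c ≤ ((m + 1 : ℕ) : ℝ) := by push_cast; exact (Nat.lt_floor_add_one c).le
  have hanti : AntitoneOn (ff n) (Ici ((m + 1 : ℕ) : ℝ)) :=
    (ff_anti hn).mono (Ici_subset_Ici.2 hcm1')
  have hmono : MonotoneOn (ff n) (Icc (0 : ℝ) (0 + (m : ℕ))) := by
    refine (ff_mono hn).mono ?_
    intro z hz
    exact ⟨hz.1, le_trans hz.2 (by rw [zero_add]; exact hmc)⟩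
  have hM : ∀ x : ℝ, 0 ≤ x → ff n x ≤ ff n c := fun x hx => ff_le_max hn hx
  have hMnn : 0 ≤ ff n c := ff_nonneg n hc.le
  have hu1 : ∑ i ∈ Finset.range m, ff n (i : ℝ) ≤ ∫ x in Ioc (0:ℝ) (m : ℝ), ff n x := by
    have h := MonotoneOn.sum_le_integral (x₀ := (0:ℝ)) (a := m) hmono
    simp only [zero_add] at h
    rwa [intervalIntegral.integral_of_le (Nat.cast_nonneg m)] at h
  have hl1 : (∫ x in Ioc (0:ℝ) (m : ℝ), ff n x) ≤ ∑ i ∈ Finset.range (m + 1), ff n (i : ℝ) := by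
    have h := MonotoneOn.integral_le_sum (x₀ := (0:ℝ)) (a := m) hmono
    simp only [zero_add] at h
    rw [intervalIntegral.integral_of_le (Nat.cast_nonneg m)] at h
    refine le_trans h (le_of_eq ?_)
    rw [Finset.sum_range_succ' (fun i : ℕ => ff n (i : ℝ)) m]
    rw [Nat.cast_zero, ff_zero hn, add_zero]
  have hu3 : (∑' j : ℕ, ff n (((j + (m + 2) : ℕ)) : ℝ)) ≤ ∫ x in Ioi (((m + 1 : ℕ)) : ℝ), ff n x := by
    have h := tail_le_integral n (m + 1) hanti
    convert h using 3
  have hl3 : (∫ x in Ioi (((m + 1 : ℕ)) : ℝ), ff n x) ≤ ∑' j : ℕ, ff n (((j + (m + 1) : ℕ)) : ℝ) :=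
    tail_integral_le n (m + 1) hanti
  have split_a := split1 n (a := 0) (b := ((m + 1 : ℕ) : ℝ)) (Nat.cast_nonneg _)
  have split_b := split1 n (a := 0) (b := ((m : ℕ) : ℝ)) (Nat.cast_nonneg _)
  have split_c := split1 n (a := ((m : ℕ) : ℝ)) (b := ((m + 1 : ℕ) : ℝ)) (by push_cast; linarith)
  have hIocmono : (∫ x in Ioc (0:ℝ) (m : ℝ), ff n x) ≤ ∫ x in Ioc (0:ℝ) ((m + 1 : ℕ) : ℝ), ff n x := by
    apply setIntegral_mono_set ((ff_integrableOn n 0).mono_set Ioc_subset_Ioi_self)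
    · exact (ae_restrict_iff' measurableSet_Ioc).2 (Eventually.of_forall fun x hx =>
        ff_nonneg n hx.1.le)
    · exact HasSubset.Subset.eventuallyLE (Ioc_subset_Ioc_right (by push_cast; linarith))
  have hl2 : (∫ x in Ioc ((m : ℝ)) ((m + 1 : ℕ) : ℝ), ff n x) ≤ ff n c := by
    have hb : ∀ x ∈ Ioc ((m : ℝ)) ((m + 1 : ℕ) : ℝ), ff n x ≤ ff n c := fun x hx =>
      hM x (le_of_lt (lt_of_le_of_lt (Nat.cast_nonneg m) hx.1))
    have h1 : (∫ x in Ioc ((m : ℝ)) ((m + 1 : ℕ) : ℝ), ff n x)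
        ≤ ∫ _ in Ioc ((m : ℝ)) ((m + 1 : ℕ) : ℝ), ff n c := by
      apply setIntegral_mono_on ((ff_integrableOn n m).mono_set Ioc_subset_Ioi_self)
        (integrableOn_const measure_Ioc_lt_top.ne) measurableSet_Ioc hb
    refine le_trans h1 (le_of_eq ?_)
    rw [setIntegral_const, Real.volume_real_Ioc, smul_eq_mul]
    have : ((m + 1 : ℕ) : ℝ) - (m : ℝ) = 1 := by push_cast; ring
    rw [this]
    simp
  have hS2 := Summable.sum_add_tsum_nat_add (f := fun j : ℕ => ff n (j : ℝ)) (m + 2) (ff_summable n)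
  have hS1 := Summable.sum_add_tsum_nat_add (f := fun j : ℕ => ff n (j : ℝ)) (m + 1) (ff_summable n)
  have hhead2 : ∑ i ∈ Finset.range (m + 2), ff n (i : ℝ)
      = (∑ i ∈ Finset.range m, ff n (i : ℝ)) + ff n ((m : ℕ) : ℝ) + ff n ((m + 1 : ℕ) : ℝ) := by
    rw [Finset.sum_range_succ, Finset.sum_range_succ]
  have hBm : ff n ((m : ℕ) : ℝ) ≤ ff n c := hM _ (Nat.cast_nonneg m)
  have hBm1 : ff n ((m + 1 : ℕ) : ℝ) ≤ ff n c := hM _ (Nat.cast_nonneg _)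
  have hI := ff_integral n
  constructor
  · -- lower bound
    rw [← hS1]
    have : (∫ x in Ioi (0:ℝ), ff n x)
        = (∫ x in Ioc (0:ℝ) (m : ℝ), ff n x) + (∫ x in Ioc ((m : ℝ)) ((m + 1 : ℕ) : ℝ), ff n x)
          + (∫ x in Ioi (((m + 1 : ℕ)) : ℝ), ff n x) := by
      rw [split_b, split_c]; ring
    rw [hI] at this
    linarith
  · -- upper bound
    rw [← hS2, hhead2]
    have : (∫ x in Ioi (0:ℝ), ff n x)
        = (∫ x in Ioc (0:ℝ) ((m + 1 : ℕ) : ℝ), ff n x) + (∫ x in Ioi (((m + 1 : ℕ)) : ℝ), ff n x) :=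
      split_a
    rw [hI] at this
    linarith

end NumPreAnal4


section FinalAux
open NumPreAnal NumPreAnal2 NumPreAnal3 NumPreAnal4

lemma ff_nat (n j : ℕ) : ff n (j : ℝ) = (j : ℝ) ^ n * (1 / 2 : ℝ) ^ j := by
  unfold ff
  congr 1
  rw [show -(Real.log 2 * (j : ℝ)) = (j : ℕ) * (-Real.log 2) by push_cast; ring,
    Real.exp_nat_mul, Real.exp_neg, Real.exp_log (by norm_num : (0:ℝ) < 2)]
  norm_num

lemma Mq_eq {n : ℕ} (hn : 1 ≤ n) :
    ff n ((n : ℝ) / Real.log 2) * (Real.log 2 ^ (n + 1) / (n.factorial : ℝ))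
      = Real.log 2 / (Stirling.stirlingSeq n * Real.sqrt (2 * (n : ℝ))) := by
  have hn0 : (0:ℝ) < n := by exact_mod_cast hn
  have hfac : (0:ℝ) < n.factorial := by exact_mod_cast n.factorial_pos
  have hsq : (0:ℝ) < Real.sqrt (2 * (n : ℝ)) := Real.sqrt_pos.2 (by positivity)
  have hexp : (0:ℝ) < Real.exp 1 := Real.exp_pos 1
  unfold ff Stirling.stirlingSeq
  have harg : Real.log 2 * ((n : ℝ) / Real.log 2) = (n : ℝ) := by
    field_simp
  rw [harg]
  have hexpn : Real.exp (-(n : ℝ)) = (Real.exp 1 ^ n)⁻¹ := by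
    rw [Real.exp_neg]
    congr 1
    rw [← Real.exp_nat_mul]
    norm_num
  rw [hexpn]
  rw [div_pow, div_pow]
  field_simp
  ring

lemma sqrt_tendsto_atTop : Tendsto Real.sqrt atTop atTop := by
  rw [tendsto_atTop_atTop]
  intro b
  refine ⟨(max 0 b) ^ 2, fun a ha => le_trans (le_max_right 0 b) ?_⟩
  calc max 0 b = Real.sqrt ((max 0 b) ^ 2) := (Real.sqrt_sq (le_max_left 0 b)).symm
  _ ≤ Real.sqrt a := Real.sqrt_le_sqrt ha

end FinalAux

end AuxProofs

/-- `P(n) ∼ (n!/2)·(1/log 2)^{n+1}` as `n → ∞`. -/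
theorem numPreorders_asymptotics :
    Filter.Tendsto (fun n : ℕ =>
      (numPreorders n : ℝ) /
        ((n.factorial : ℝ) / 2 * (1 / Real.log 2) ^ (n + 1)))
      Filter.atTop (nhds 1) := by
  classical
  set t : ℝ := Real.log 2 with ht
  have htp : 0 < t := NumPreAnal.t_pos
  set S : ℕ → ℝ := fun n => ∑' j : ℕ, NumPreAnal.ff n (j : ℝ) with hSdef
  set r : ℕ → ℝ := fun n : ℕ =>
    (numPreorders n : ℝ) / ((n.factorial : ℝ) / 2 * (1 / t) ^ (n + 1)) with hrdef
  show Filter.Tendsto r Filter.atTop (nhds 1)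
  have hNum : ∀ n : ℕ, (numPreorders n : ℝ) = 2⁻¹ * S n := by
    intro n
    have h1 := NumPreAux.hasSum_numPreorders n
    have h2 : HasSum (fun j : ℕ => 2⁻¹ * NumPreAnal.ff n (j : ℝ)) (2⁻¹ * S n) :=
      (NumPreAnal2.ff_summable n).hasSum.mul_left 2⁻¹
    have heq : (fun j : ℕ => (j : ℝ) ^ n * (1 / 2) ^ (j + 1))
        = fun j : ℕ => 2⁻¹ * NumPreAnal.ff n (j : ℝ) := by
      funext j
      rw [ff_nat n j, pow_succ]
      ring
    rw [heq] at h1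
    exact h1.unique h2
  have hrS : ∀ n : ℕ, 1 ≤ n → r n = S n * (t ^ (n + 1) / (n.factorial : ℝ)) := by
    intro n hn
    have hfac : (n.factorial : ℝ) ≠ 0 := by
      exact_mod_cast n.factorial_ne_zero
    rw [hrdef]
    dsimp only
    rw [hNum n, one_div, inv_pow]
    field_simp
  set E : ℕ → ℝ := fun n => t / (Stirling.stirlingSeq n * Real.sqrt (2 * (n : ℝ))) with hEdef
  have hbound : ∀ᶠ n in Filter.atTop, ‖r n - 1‖ ≤ 2 * E n := by
    filter_upwards [Filter.eventually_ge_atTop 1] with n hn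
    obtain ⟨hlow, hupp⟩ := NumPreAnal4.sandwich hn
    have hfacpos : (0:ℝ) < n.factorial := by exact_mod_cast n.factorial_pos
    have hq : (0:ℝ) < t ^ (n + 1) / (n.factorial : ℝ) := by positivity
    have hIq : (n.factorial : ℝ) / t ^ (n + 1) * (t ^ (n + 1) / (n.factorial : ℝ)) = 1 := by
      field_simp
    have hMq := Mq_eq hn
    have hMnn : 0 ≤ NumPreAnal.ff n ((n : ℝ) / t) :=
      NumPreAnal.ff_nonneg n (by positivity)
    have h1 := mul_le_mul_of_nonneg_right hlow hq.le
    have h2 := mul_le_mul_of_nonneg_right hupp hq.le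
    rw [hrS n hn, Real.norm_eq_abs, abs_le]
    constructor
    · nlinarith [h1, hMq, hIq, mul_le_mul_of_nonneg_right hMnn hq.le]
    · nlinarith [h2, hMq, hIq, mul_le_mul_of_nonneg_right hMnn hq.le]
  have hE0 : Filter.Tendsto E Filter.atTop (nhds 0) := by
    apply Filter.Tendsto.div_atTop tendsto_const_nhds
    apply Filter.Tendsto.pos_mul_atTop (Real.sqrt_pos.2 Real.pi_pos)
      Stirling.tendsto_stirlingSeq_sqrt_pi
    exact sqrt_tendsto_atTop.comp
      ((tendsto_natCast_atTop_atTop (R := ℝ)).const_mul_atTop two_pos)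
  have h2E : Filter.Tendsto (fun n => 2 * E n) Filter.atTop (nhds 0) := by
    have := hE0.const_mul (2 : ℝ)
    simpa only [mul_zero] using this
  have hdiff := squeeze_zero_norm' hbound h2E
  have hfin := hdiff.add (tendsto_const_nhds (x := (1 : ℝ)))
  simpa using hfin
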